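/- arXiv:1605.08811 — 4 statements merged into one kernel-verified Lean document; each statement's English description precedes it below -/
import Mathlib

section
/- Let κ be a regular uncountable cardinal and λ a cardinal with cf(λ) > κ. Fix an increasing sequence ⟨λ_i : i < cf(λ)⟩ cofinal in λ. Let T be a family of subsets of λ and for each i < cf(λ) let Lev_i(T) = {A ∩ λ_i : A ∈ T}, and suppose |Lev_i(T)| < κ for every i. Then there exist a stationary set S ⊆ cf(λ) consisting of ordinals of cofinality κ and a fixed k < cf(λ) such that for all i ∈ S and all A, B ∈ T, if A ∩ λ_i ≠ B ∩ λ_i then A ∩ λ_k ≠ B ∩ λ_k. -/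
/-- `C` is a closed unbounded subset of the ordinal `o`. -/
def IsClubIn (o : Ordinal.{0}) (C : Set Ordinal.{0}) : Prop :=
  C ⊆ Set.Iio o ∧ (∀ a < o, ∃ b ∈ C, a ≤ b) ∧
    ∀ a < o, 0 < a → (∀ b < a, ∃ c ∈ C, b < c ∧ c < a) → a ∈ C

/-- `S` is a stationary subset of the ordinal `o`. -/
def IsStationaryIn (o : Ordinal.{0}) (S : Set Ordinal.{0}) : Prop :=
  S ⊆ Set.Iio o ∧ ∀ C : Set Ordinal.{0}, IsClubIn o C → (S ∩ C).Nonempty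

/-- Transfinite recursion: pick at each step an element of `C` above all previous picks. -/
noncomputable def clubSeq (C : Set Ordinal.{0}) : Ordinal.{0} → Ordinal.{0} :=
  Ordinal.lt_wf.fix fun o ih => sInf {c | c ∈ C ∧ ∀ j, ∀ h : j < o, ih j h < c}

theorem clubSeq_def (C : Set Ordinal.{0}) (o : Ordinal.{0}) :
    clubSeq C o = sInf {c | c ∈ C ∧ ∀ j, ∀ _ : j < o, clubSeq C j < c} := by
  rw [clubSeq, WellFounded.fix_eq]

theorem clubSeq_spec {ν : Ordinal.{0}} {C : Set Ordinal.{0}}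
    (hsub : C ⊆ Set.Iio ν) (hunb : ∀ a < ν, ∃ b ∈ C, a ≤ b) :
    ∀ o : Ordinal.{0}, o.card < ν.cof →
      clubSeq C o ∈ C ∧ ∀ j < o, clubSeq C j < clubSeq C o := by
  intro o
  induction o using Ordinal.induction with
  | h o IH =>
    intro hcard
    have hcards : ∀ j < o, j.card < ν.cof :=
      fun j hj => lt_of_le_of_lt (Ordinal.card_le_card hj.le) hcard
    have hlt : ∀ j (hj : j < o), clubSeq C j < ν :=
      fun j hj => hsub (IH j hj (hcards j hj)).1
    have hb : Ordinal.blsub o (fun j _ => clubSeq C j) < ν :=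
      Ordinal.blsub_lt_ord hcard hlt
    obtain ⟨c, hcC, hc⟩ := hunb _ hb
    have hne : {c | c ∈ C ∧ ∀ j, ∀ _ : j < o, clubSeq C j < c}.Nonempty :=
      ⟨c, hcC, fun j hj => lt_of_lt_of_le (Ordinal.lt_blsub _ j hj) hc⟩
    have hmem := csInf_mem hne
    rw [← clubSeq_def] at hmem
    exact ⟨hmem.1, fun j hj => hmem.2 j hj⟩

/-- The set of ordinals of cofinality `κ` below `ν` is stationary in `ν`,
when `κ` is regular and `κ < cof ν`. -/
theorem cof_stationary {κ : Cardinal.{0}} {ν : Ordinal.{0}}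
    (hκreg : κ.IsRegular) (hcf : κ < ν.cof) :
    IsStationaryIn ν {i | i < ν ∧ i.cof = κ} := by
  refine ⟨fun i hi => hi.1, fun C hC => ?_⟩
  obtain ⟨hsub, hunb, hclosed⟩ := hC
  have hκord : (κ.ord).card = κ := Cardinal.card_ord κ
  have hκlim : Order.IsSuccLimit κ.ord := Cardinal.isSuccLimit_ord hκreg.aleph0_le
  have hspec : ∀ o : Ordinal.{0}, o ≤ κ.ord →
      clubSeq C o ∈ C ∧ ∀ j < o, clubSeq C j < clubSeq C o := by
    intro o ho
    exact clubSeq_spec hsub hunb o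
      (lt_of_le_of_lt (by rw [← hκord]; exact Ordinal.card_le_card ho) hcf)
  set f : ∀ j < κ.ord, Ordinal.{0} := fun j _ => clubSeq C j with hf
  set i₀ : Ordinal.{0} := Ordinal.blsub κ.ord f with hi₀
  have hmem : ∀ j < κ.ord, clubSeq C j ∈ C := fun j hj => (hspec j hj.le).1
  have hmono : ∀ j j', j < j' → j' ≤ κ.ord → clubSeq C j < clubSeq C j' :=
    fun j j' hjj' hj' => (hspec j' hj').2 j hjj'
  have hi₀ν : i₀ < ν := Ordinal.blsub_lt_ord (by rw [hκord]; exact hcf)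
    (fun j hj => hsub (hmem j hj))
  have hlti : ∀ j (hj : j < κ.ord), clubSeq C j < i₀ := fun j hj => Ordinal.lt_blsub f j hj
  have hpos : 0 < i₀ := lt_of_le_of_lt (zero_le (a := clubSeq C 0)) (hlti 0 hκlim.pos)
  have hiC : i₀ ∈ C := by
    refine hclosed i₀ hi₀ν hpos ?_
    intro b hb
    obtain ⟨j, hj, hbj⟩ := Ordinal.lt_blsub_iff.1 hb
    refine ⟨clubSeq C (j + 1), hmem _ (hκlim.succ_lt hj), ?_, hlti _ (hκlim.succ_lt hj)⟩
    exact lt_of_le_of_lt hbj (hmono j (j + 1) (Order.lt_succ j) (hκlim.succ_lt hj).le)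
  have hcof_le : i₀.cof ≤ κ := by
    have := Ordinal.cof_blsub_le f
    rwa [hκord] at this
  have hcof_ge : κ ≤ i₀.cof := by
    rw [Ordinal.le_cof_iff_lsub]
    intro ι g hg
    by_contra hlt
    push_neg at hlt
    set h : ι → Ordinal.{0} := fun x => sInf {j | j < κ.ord ∧ g x < clubSeq C j} with hh
    have hne : ∀ x : ι, {j | j < κ.ord ∧ g x < clubSeq C j}.Nonempty := by
      intro x
      have : g x < i₀ := by rw [← hg]; exact Ordinal.lt_lsub g x
      obtain ⟨j, hj, hgj⟩ := Ordinal.lt_blsub_iff.1 this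
      exact ⟨j + 1, hκlim.succ_lt hj,
        lt_of_le_of_lt hgj (hmono j (j + 1) (Order.lt_succ j) (hκlim.succ_lt hj).le)⟩
    have hhx : ∀ x, h x < κ.ord ∧ g x < clubSeq C (h x) := fun x => csInf_mem (hne x)
    have hj0 : Ordinal.lsub h < κ.ord := by
      apply Ordinal.lsub_lt_ord _ (fun x => (hhx x).1)
      rwa [hκreg.cof_eq]
    have : ∀ x, g x < clubSeq C (Ordinal.lsub h) := fun x =>
      lt_trans (hhx x).2 (hmono _ _ (Ordinal.lt_lsub h x) hj0.le)
    have h1 : i₀ ≤ clubSeq C (Ordinal.lsub h) := by rw [← hg]; exact Ordinal.lsub_le this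
    exact absurd (lt_of_le_of_lt h1 (hlti _ hj0)) (lt_irrefl _)
  exact ⟨i₀, ⟨hi₀ν, le_antisymm hcof_le hcof_ge⟩, hiC⟩

/-- If a family `T` of subsets of `λ` has all levels `Lev_i(T)` of size `< κ` (with
`cf(λ) > κ`, `κ` regular uncountable), then there are a stationary set `S ⊆ cf(λ)` of
ordinals of cofinality `κ` and a fixed `k < cf(λ)` such that for `i ∈ S`, distinct
restrictions to `λ_i` already differ at `λ_k`. -/
theorem stmt3 (κ l : Cardinal.{0}) (hκreg : κ.IsRegular) (hκunc : Cardinal.aleph0 < κ)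
    (hcf : κ < l.ord.cof)
    (ν : Ordinal.{0}) (hν : ν = l.ord.cof.ord)
    (lam : Ordinal.{0} → Ordinal.{0})
    (hlt : ∀ i < ν, lam i < l.ord)
    (hinc : ∀ i j, i < j → j < ν → lam i < lam j)
    (hcofinal : ∀ a < l.ord, ∃ i < ν, a ≤ lam i)
    (T : Set (Set Ordinal.{0})) (hT : ∀ A ∈ T, A ⊆ Set.Iio l.ord)
    (hlev : ∀ i < ν,
      Cardinal.mk {x : Set Ordinal.{0} | ∃ A ∈ T, x = A ∩ Set.Iio (lam i)} <
        Cardinal.lift.{1} κ) :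
    ∃ (S : Set Ordinal.{0}) (k : Ordinal.{0}),
      IsStationaryIn ν S ∧ (∀ i ∈ S, i.cof = κ) ∧ k < ν ∧
      ∀ i ∈ S, ∀ A ∈ T, ∀ B ∈ T,
        A ∩ Set.Iio (lam i) ≠ B ∩ Set.Iio (lam i) →
        A ∩ Set.Iio (lam k) ≠ B ∩ Set.Iio (lam k) := by
  have hνcof : ν.cof = l.ord.cof := by rw [hν, Ordinal.cof_cof]
  have hcfν : κ < ν.cof := by rwa [hνcof]
  have hνlim : Order.IsSuccLimit ν := by
    rw [hν]
    exact Cardinal.isSuccLimit_ord (le_trans hκunc.le hcf.le)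
  have hκord : (κ.ord).card = κ := Cardinal.card_ord κ
  have hκlim : Order.IsSuccLimit κ.ord := Cardinal.isSuccLimit_ord hκreg.aleph0_le
  -- monotonicity helper for restrictions
  have hres : ∀ (A : Set Ordinal.{0}) (a b : Ordinal.{0}), a ≤ b →
      (A ∩ Set.Iio b) ∩ Set.Iio a = A ∩ Set.Iio a := by
    intro A a b hab
    rw [Set.inter_assoc, Set.Iio_inter_Iio, min_eq_right hab]
  -- the set of "thresholds"
  set O : Set Ordinal.{0} := {o | o < ν ∧ ∃ A ∈ T, ∃ B ∈ T,
      (∀ j < o, A ∩ Set.Iio (lam j) = B ∩ Set.Iio (lam j)) ∧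
      A ∩ Set.Iio (lam o) ≠ B ∩ Set.Iio (lam o)} with hO
  -- Step A: O is bounded below ν
  have hbound : ∃ k < ν, ∀ o ∈ O, o ≤ k := by
    by_contra hcon
    push_neg at hcon
    have hOsub : O ⊆ Set.Iio ν := fun o ho => ho.1
    have hOunb : ∀ a < ν, ∃ b ∈ O, a ≤ b := by
      intro a ha
      obtain ⟨o, hoO, hao⟩ := hcon a ha
      exact ⟨o, hoO, hao.le⟩
    have hspec : ∀ o : Ordinal.{0}, o ≤ κ.ord →
        clubSeq O o ∈ O ∧ ∀ j < o, clubSeq O j < clubSeq O o := by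
      intro o ho
      exact clubSeq_spec hOsub hOunb o
        (lt_of_le_of_lt (by rw [← hκord]; exact Ordinal.card_le_card ho) hcfν)
    set f : ∀ j < κ.ord, Ordinal.{0} := fun j _ => clubSeq O j with hf
    set i₀ : Ordinal.{0} := Ordinal.blsub κ.ord f with hi₀
    have hi₀ν : i₀ < ν := Ordinal.blsub_lt_ord (by rw [hκord]; exact hcfν)
      (fun j hj => (hspec j hj.le).1.1)
    have hlti : ∀ j (hj : j < κ.ord), clubSeq O j < i₀ := fun j hj => Ordinal.lt_blsub f j hj
    -- choose witnesses
    have hwit : ∀ ξ : Set.Iio (κ.ord), ∃ A ∈ T, ∃ B ∈ T,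
        (∀ j < clubSeq O ξ.1, A ∩ Set.Iio (lam j) = B ∩ Set.Iio (lam j)) ∧
        A ∩ Set.Iio (lam (clubSeq O ξ.1)) ≠ B ∩ Set.Iio (lam (clubSeq O ξ.1)) :=
      fun ξ => (hspec ξ.1 ξ.2.le).1.2
    choose Aw hAw Bw hBw heq hne using hwit
    set Lev : Set (Set Ordinal.{0}) :=
      {x : Set Ordinal.{0} | ∃ A ∈ T, x = A ∩ Set.Iio (lam i₀)} with hLev
    set G : Set.Iio (κ.ord) → (Lev × Lev) := fun ξ =>
      (⟨Aw ξ ∩ Set.Iio (lam i₀), ⟨Aw ξ, hAw ξ, rfl⟩⟩,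
       ⟨Bw ξ ∩ Set.Iio (lam i₀), ⟨Bw ξ, hBw ξ, rfl⟩⟩) with hG
    have hGni : ¬ Function.Injective G := by
      intro hinj
      have h1 : Cardinal.mk (Set.Iio (κ.ord)) ≤ Cardinal.mk (Lev × Lev) :=
        Cardinal.mk_le_of_injective hinj
      have h2 : Cardinal.mk (Set.Iio (κ.ord)) = Cardinal.lift.{1} κ := by
        rw [Ordinal.mk_Iio_ordinal, hκord]
      have h3 : Cardinal.mk (Lev × Lev) < Cardinal.lift.{1} κ := by
        rw [Cardinal.mk_prod]
        simp only [Cardinal.lift_id]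
        exact Cardinal.mul_lt_of_lt (Cardinal.aleph0_le_lift.2 hκreg.aleph0_le)
          (hlev i₀ hi₀ν) (hlev i₀ hi₀ν)
      rw [h2] at h1
      exact absurd (lt_of_le_of_lt h1 h3) (lt_irrefl _)
    rw [Function.not_injective_iff] at hGni
    obtain ⟨ξ, ζ, hGeq, hξζ⟩ := hGni
    -- a symmetric helper: smaller index ξ, larger ζ
    have hkey : ∀ ξ ζ : Set.Iio (κ.ord), ξ.1 < ζ.1 → G ξ = G ζ → False := by
      intro ξ ζ hlt' hGeq'
      have hoo : clubSeq O ξ.1 < clubSeq O ζ.1 := (hspec ζ.1 ζ.2.le).2 ξ.1 hlt'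
      have hAeq : Aw ξ ∩ Set.Iio (lam i₀) = Aw ζ ∩ Set.Iio (lam i₀) :=
        congrArg (fun p => (p.1 : Set Ordinal.{0})) hGeq'
      have hBeq : Bw ξ ∩ Set.Iio (lam i₀) = Bw ζ ∩ Set.Iio (lam i₀) :=
        congrArg (fun p => (p.2 : Set Ordinal.{0})) hGeq'
      set o := clubSeq O ξ.1 with ho
      have hoi : o < i₀ := hlti ξ.1 ξ.2
      have hlamle : lam o ≤ lam i₀ := (hinc o i₀ hoi hi₀ν).le
      apply hne ξ
      calc Aw ξ ∩ Set.Iio (lam o) = (Aw ξ ∩ Set.Iio (lam i₀)) ∩ Set.Iio (lam o) :=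
            (hres _ _ _ hlamle).symm
        _ = (Aw ζ ∩ Set.Iio (lam i₀)) ∩ Set.Iio (lam o) := by rw [hAeq]
        _ = Aw ζ ∩ Set.Iio (lam o) := hres _ _ _ hlamle
        _ = Bw ζ ∩ Set.Iio (lam o) := heq ζ o hoo
        _ = (Bw ζ ∩ Set.Iio (lam i₀)) ∩ Set.Iio (lam o) := (hres _ _ _ hlamle).symm
        _ = (Bw ξ ∩ Set.Iio (lam i₀)) ∩ Set.Iio (lam o) := by rw [hBeq]
        _ = Bw ξ ∩ Set.Iio (lam o) := hres _ _ _ hlamle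
    have hvne : ξ.1 ≠ ζ.1 := fun h => hξζ (Subtype.ext h)
    rcases hvne.lt_or_gt with h | h
    · exact hkey ξ ζ h hGeq
    · exact hkey ζ ξ h hGeq.symm
  obtain ⟨k, hkν, hk⟩ := hbound
  refine ⟨{i | i < ν ∧ i.cof = κ}, k, cof_stationary hκreg hcfν, fun i hi => hi.2, hkν, ?_⟩
  intro i hi A hA B hB hABi
  -- the threshold for A, B
  set D : Set Ordinal.{0} := {j | A ∩ Set.Iio (lam j) ≠ B ∩ Set.Iio (lam j)} with hD
  have hDne : D.Nonempty := ⟨i, hABi⟩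
  set o := sInf D with ho
  have hoD : o ∈ D := csInf_mem hDne
  have hoi : o ≤ i := csInf_le' hABi
  have hoν : o < ν := lt_of_le_of_lt hoi hi.1
  have hoO : o ∈ O := by
    refine ⟨hoν, A, hA, B, hB, ?_, hoD⟩
    intro j hj
    by_contra hne'
    exact hj.not_ge (csInf_le' (show j ∈ D from hne'))
  have hok : o ≤ k := hk o hoO
  have hlamle : lam o ≤ lam k := by
    rcases eq_or_lt_of_le hok with h | h
    · rw [h]
    · exact (hinc o k h hkν).le
  intro hABk
  apply hoD
  calc A ∩ Set.Iio (lam o) = (A ∩ Set.Iio (lam k)) ∩ Set.Iio (lam o) := (hres _ _ _ hlamle).symm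
    _ = (B ∩ Set.Iio (lam k)) ∩ Set.Iio (lam o) := by rw [hABk]
    _ = B ∩ Set.Iio (lam o) := hres _ _ _ hlamle
end

section
/- Let P and Q be partial orders with P ⊆ Q (P a suborder of Q), and suppose there is a map r : Q → P such that: (i) q ≤ r(q) in Q for all q ∈ Q; (ii) r is order-preserving; (iii) r(p) = p for p ∈ P; and (iv) for every q ∈ Q and every u ∈ P with u ≤ r(q), there exists q' ≤ q in Q with r(q') = u. Then for every regular open subset A ⊆ P, its downward closure dcl(A) = {q ∈ Q : ∃a ∈ A, q ≤ a} is regular open in Q; moreover, an element q ∈ Q lies in dcl(A) if and only if r(q) ∈ A. Consequently the map A ↦ dcl(A) preserves arbitrary intersections of regular open sets and sends the regular-open complement of A in P to the regular-open complement of dcl(A) in Q. -/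
universe u v

/-- Downward closure of a subset of a preorder. -/
def dcl {Q : Type u} [Preorder Q] (A : Set Q) : Set Q := {q | ∃ a ∈ A, q ≤ a}

/-- `A` is a regular open subset of the suborder `S`. -/
def RegOpenIn {Q : Type u} [Preorder Q] (S A : Set Q) : Prop :=
  A ⊆ S ∧ (∀ p ∈ A, ∀ q ∈ S, q ≤ p → q ∈ A) ∧
    ∀ p ∈ S, (∀ q ∈ S, q ≤ p → ∃ r ∈ A, r ≤ q) → p ∈ A

/-- `A` is a regular open subset of the whole preorder. -/
def RegOpen {Q : Type u} [Preorder Q] (A : Set Q) : Prop :=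
  (∀ p ∈ A, ∀ q, q ≤ p → q ∈ A) ∧
    ∀ p, (∀ q ≤ p, ∃ r ∈ A, r ≤ q) → p ∈ A

/-- Given a suborder `P ⊆ Q` with a projection `r : Q → P` (with `q ≤ r q`, `r`
order-preserving, `r` the identity on `P`, and every `u ≤ r q` in `P` realized as `r q'`
for some `q' ≤ q`), the downward closure of any regular open `A ⊆ P` is regular open in
`Q`, characterised by `q ∈ dcl A ↔ r q ∈ A`; moreover `dcl` preserves arbitrary
intersections of regular open sets and sends regular-open complements to
regular-open complements. -/
theorem stmt6 {Q : Type u} [Preorder Q] (P : Set Q) (r : Q → Q)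
    (hrP : ∀ q, r q ∈ P)
    (h1 : ∀ q, q ≤ r q)
    (h2 : ∀ q q', q ≤ q' → r q ≤ r q')
    (h3 : ∀ p ∈ P, r p = p)
    (h4 : ∀ q, ∀ u ∈ P, u ≤ r q → ∃ q', q' ≤ q ∧ r q' = u)
    (ι : Type v) :
    (∀ A : Set Q, RegOpenIn P A →
      (RegOpen (dcl A) ∧ ∀ q, q ∈ dcl A ↔ r q ∈ A)) ∧
    (∀ A : ι → Set Q, (∀ i, RegOpenIn P (A i)) →
      dcl (⋂ i, A i) = ⋂ i, dcl (A i)) ∧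
    (∀ A : Set Q, RegOpenIn P A →
      dcl {p | p ∈ P ∧ ∀ q ∈ P, q ≤ p → q ∉ A} = {x | ∀ y ≤ x, y ∉ dcl A}) := by
  -- key characterisation
  have key : ∀ A : Set Q, RegOpenIn P A → ∀ q, q ∈ dcl A ↔ r q ∈ A := by
    intro A ⟨hAP, hdown, _⟩ q
    constructor
    · rintro ⟨a, ha, hqa⟩
      have haP := hAP ha
      have : r q ≤ a := by
        have := h2 q a hqa
        rwa [h3 a haP] at this
      exact hdown a ha (r q) (hrP q) this
    · intro h
      exact ⟨r q, h, h1 q⟩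
  have main : ∀ A : Set Q, RegOpenIn P A → RegOpen (dcl A) := by
    intro A hA
    obtain ⟨hAP, hdown, hreg⟩ := hA
    constructor
    · rintro p ⟨a, ha, hpa⟩ q hqp
      exact ⟨a, ha, le_trans hqp hpa⟩
    · intro p hp
      rw [key A ⟨hAP, hdown, hreg⟩ p]
      apply hreg (r p) (hrP p)
      intro u huP hurp
      obtain ⟨q', hq'p, hrq'⟩ := h4 p u huP hurp
      obtain ⟨s, hs, hsq'⟩ := hp q' hq'p
      refine ⟨r s, (key A ⟨hAP, hdown, hreg⟩ s).1 hs, ?_⟩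
      · have := h2 s q' hsq'
        rwa [hrq'] at this
  refine ⟨fun A hA => ⟨main A hA, key A hA⟩, ?_, ?_⟩
  · intro A hA
    ext q
    simp only [Set.mem_iInter]
    constructor
    · rintro ⟨a, ha, hqa⟩ i
      exact ⟨a, Set.mem_iInter.1 ha i, hqa⟩
    · intro h
      refine ⟨r q, Set.mem_iInter.2 fun i => (key (A i) (hA i) q).1 (h i), h1 q⟩
  · intro A hA
    obtain ⟨hAP, hdown, hreg⟩ := hA
    ext x
    constructor
    · rintro ⟨a, ⟨haP, hano⟩, hxa⟩ y hyx ⟨b, hb, hyb⟩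
      have hbP := hAP hb
      have hrya : r y ≤ a := by
        have t1 := h2 y x hyx
        have t2 := h2 x a hxa
        rw [h3 a haP] at t2
        exact le_trans t1 t2
      have : r y ∈ A := by
        have := h2 y b hyb
        rw [h3 b hbP] at this
        exact hdown b hb (r y) (hrP y) this
      exact hano (r y) (hrP y) hrya this
    · intro hx
      refine ⟨r x, ⟨hrP x, ?_⟩, h1 x⟩
      intro u huP hurx huA
      obtain ⟨q', hq'x, hrq'⟩ := h4 x u huP hurx
      exact hx q' hq'x ⟨u, huA, hrq' ▸ h1 q'⟩
end

section
/- Let 𝔸 be the set of finite partial functions from ω to 2 ordered by reverse inclusion (Cohen forcing). Let ⟨D_i : i < ω⟩ be any countable family of dense subsets of 𝔸, and let x ⊆ ω. Then there exist total functions g, h : ω → 2 such that: (a) for every i, some finite initial segment of g belongs to D_i, and likewise for h; and (b) letting ḡ = {n : g(n) = 1} and h̄ = {n : h(n) = 1}, the set ḡ ∩ h̄ is infinite and for every i < ω, the i-th element of ḡ ∩ h̄ (in increasing order) is even if and only if i ∈ x. -/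
namespace Stmt9Aux

/-- `getB p n` : the value of the partial function `p` at `n`, defaulting to `false`. -/
def getB (p : List Bool) (n : ℕ) : Bool := p.getD n false

lemma getB_of_prefix {p q : List Bool} (h : p <+: q) {n : ℕ} (hn : n < p.length) :
    getB q n = getB p n := by
  obtain ⟨r, rfl⟩ := h
  simp [getB, List.getD, List.getElem?_append_left hn]

lemma getB_of_ge {p : List Bool} {n : ℕ} (hn : p.length ≤ n) : getB p n = false := by
  simp [getB, List.getD, List.getElem?_eq_none hn]

/-- Pad `p` with `false`s to length (at least) `n`. -/
def pad (p : List Bool) (n : ℕ) : List Bool := p ++ List.replicate (n - p.length) false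

lemma pad_prefix (p : List Bool) (n : ℕ) : p <+: pad p n := ⟨_, rfl⟩

lemma pad_length (p : List Bool) (n : ℕ) : (pad p n).length = max p.length n := by
  simp [pad]; omega

lemma getB_pad (p : List Bool) (n k : ℕ) : getB (pad p n) k = getB p k := by
  rcases lt_or_ge k p.length with hk | hk
  · exact getB_of_prefix (pad_prefix p n) hk
  · rw [getB_of_ge hk]
    rcases lt_or_ge k (pad p n).length with hk2 | hk2
    · have : (pad p n)[k] = false := by
        simp only [pad] at hk2 ⊢
        rw [List.getElem_append_right hk]
        simp
      simp [getB, List.getD, List.getElem?_eq_getElem hk2, this]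
    · exact getB_of_ge hk2

lemma getB_append_true (p : List Bool) (k : ℕ) :
    getB (p ++ [true]) k = if k = p.length then true else getB p k := by
  rcases lt_trichotomy k p.length with hk | hk | hk
  · rw [if_neg hk.ne, getB_of_prefix ⟨[true], rfl⟩ hk]
  · subst hk
    simp [getB, List.getD]
  · rw [if_neg hk.ne', getB_of_ge hk.le, getB_of_ge (by simp; omega)]

variable (D : ℕ → Set (List Bool)) (hD : ∀ i, ∀ p : List Bool, ∃ q ∈ D i, p <+: q)
  (x : Set ℕ)

noncomputable def ext (i : ℕ) (p : List Bool) : List Bool := (hD i p).choose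

lemma ext_mem (i : ℕ) (p : List Bool) : ext D hD i p ∈ D i := (hD i p).choose_spec.1

lemma ext_prefix (i : ℕ) (p : List Bool) : p <+: ext D hD i p := (hD i p).choose_spec.2

open Classical in
/-- One step of the fusion: extend both sides into `D i`, then append a common `1`
at a position whose parity codes whether `i ∈ x`. -/
noncomputable def step (i : ℕ) (p q : List Bool) : List Bool × List Bool :=
  let p₁ := ext D hD i p
  let q₂ := ext D hD i (pad q p₁.length)
  let L := q₂.length
  let p₂ := pad p₁ L
  let m := if (i ∈ x ↔ Even L) then L else L + 1
  (pad p₂ m ++ [true], pad q₂ m ++ [true])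

lemma step_spec (i : ℕ) (p q : List Bool) (hlen : p.length = q.length) :
    ∃ m : ℕ,
      ((step D hD x i p q).1).length = m + 1 ∧
      ((step D hD x i p q).2).length = m + 1 ∧
      p.length ≤ m ∧
      (Even m ↔ i ∈ x) ∧
      p <+: (step D hD x i p q).1 ∧
      q <+: (step D hD x i p q).2 ∧
      (∃ r ∈ D i, r <+: (step D hD x i p q).1) ∧
      (∃ r ∈ D i, r <+: (step D hD x i p q).2) ∧
      (∀ n, (getB (step D hD x i p q).1 n = true ∧ getB (step D hD x i p q).2 n = true)
         ↔ (n = m ∨ (getB p n = true ∧ getB q n = true))) := by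
  classical
  set p₁ := ext D hD i p with hp₁
  set q₂ := ext D hD i (pad q p₁.length) with hq₂
  set L := q₂.length with hL
  set p₂ := pad p₁ L with hp₂
  set m := if (i ∈ x ↔ Even L) then L else L + 1 with hm
  have hstep : step D hD x i p q = (pad p₂ m ++ [true], pad q₂ m ++ [true]) := rfl
  have hq₂len : q₂.length = L := hL.symm
  have hLq : (pad q p₁.length).length ≤ L := by
    rw [hL, hq₂]; exact (ext_prefix D hD i (pad q p₁.length)).length_le
  have hpadqlen : (pad q p₁.length).length = max q.length p₁.length := pad_length _ _
  have hp₁L : p₁.length ≤ L := by omega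
  have hp₂L : p₂.length = L := by rw [hp₂, pad_length]; omega
  have hLm : L ≤ m := by rw [hm]; split <;> omega
  have hpm : p.length ≤ m := by omega
  have hpadp : (pad p₂ m).length = m := by rw [pad_length]; omega
  have hpadq : (pad q₂ m).length = m := by rw [pad_length]; omega
  refine ⟨m, ?_, ?_, hpm, ?_, ?_, ?_, ?_, ?_, ?_⟩
  · rw [hstep]; simp [hpadp]
  · rw [hstep]; simp [hpadq]
  · rw [hm]
    by_cases hix : (i ∈ x ↔ Even L)
    · rw [if_pos hix]; tauto
    · rw [if_neg hix, Nat.even_add_one]; tauto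
  · rw [hstep]
    exact ((ext_prefix D hD i p).trans ((pad_prefix _ _).trans (pad_prefix _ _))).trans
      ⟨[true], rfl⟩
  · rw [hstep]
    exact (((pad_prefix q _).trans (ext_prefix D hD i _)).trans (pad_prefix _ _)).trans
      ⟨[true], rfl⟩
  · exact ⟨p₁, ext_mem D hD i p, by
      rw [hstep]
      exact (((pad_prefix _ _).trans (pad_prefix _ _))).trans ⟨[true], rfl⟩⟩
  · exact ⟨q₂, ext_mem D hD i _, by
      rw [hstep]
      exact (pad_prefix _ _).trans ⟨[true], rfl⟩⟩
  · intro n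
    have e1 : getB (step D hD x i p q).1 n = if n = m then true else getB p₁ n := by
      rw [hstep]
      simp only
      rw [getB_append_true, hpadp, getB_pad, hp₂, getB_pad]
    have e2 : getB (step D hD x i p q).2 n = if n = m then true else getB q₂ n := by
      rw [hstep]
      simp only
      rw [getB_append_true, hpadq, getB_pad]
    rw [e1, e2]
    by_cases hnm : n = m
    · simp [hnm]
    · rw [if_neg hnm, if_neg hnm]
      have key : (getB p₁ n = true ∧ getB q₂ n = true) ↔
          (getB p n = true ∧ getB q n = true) := by
        constructor
        · rintro ⟨h1, h2⟩
          have hn1 : n < p₁.length := by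
            by_contra hc
            rw [getB_of_ge (le_of_not_gt hc)] at h1
            exact Bool.false_ne_true h1
          have hq2n : getB q₂ n = getB q n := by
            rw [hq₂, getB_of_prefix (ext_prefix D hD i (pad q p₁.length))
              (by rw [pad_length]; omega), getB_pad]
          rw [hq2n] at h2
          have hn2 : n < q.length := by
            by_contra hc
            rw [getB_of_ge (le_of_not_gt hc)] at h2
            exact Bool.false_ne_true h2
          have hp1n : getB p₁ n = getB p n := by
            rw [hp₁]
            exact getB_of_prefix (ext_prefix D hD i p) (by omega)
          exact ⟨hp1n ▸ h1, h2⟩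
        · rintro ⟨h1, h2⟩
          have hn2 : n < q.length := by
            by_contra hc
            rw [getB_of_ge (le_of_not_gt hc)] at h2
            exact Bool.false_ne_true h2
          have hp1n : getB p₁ n = getB p n := by
            rw [hp₁]
            exact getB_of_prefix (ext_prefix D hD i p) (by omega)
          have hq2n : getB q₂ n = getB q n := by
            rw [hq₂, getB_of_prefix (ext_prefix D hD i (pad q p₁.length))
              (by rw [pad_length]; omega), getB_pad]
          exact ⟨hp1n ▸ h1, hq2n ▸ h2⟩
      rw [key]
      tauto

/-- The fusion sequence. -/
noncomputable def F : ℕ → List Bool × List Bool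
  | 0 => ([], [])
  | i + 1 => step D hD x i (F i).1 (F i).2

lemma F_succ (i : ℕ) :
    F D hD x (i + 1) = step D hD x i (F D hD x i).1 (F D hD x i).2 := rfl

lemma len_eq : ∀ i, ((F D hD x i).1).length = ((F D hD x i).2).length := by
  intro i
  induction i with
  | zero => rfl
  | succ i ih =>
    obtain ⟨m, h1, h2, -⟩ := step_spec D hD x i (F D hD x i).1 (F D hD x i).2 ih
    rw [F_succ]
    omega

/-- The packaged spec of one fusion step, phrased in terms of `F`. -/
lemma F_spec (i : ℕ) :
    ∃ m : ℕ,
      ((F D hD x (i + 1)).1).length = m + 1 ∧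
      ((F D hD x (i + 1)).2).length = m + 1 ∧
      ((F D hD x i).1).length ≤ m ∧
      (Even m ↔ i ∈ x) ∧
      (F D hD x i).1 <+: (F D hD x (i + 1)).1 ∧
      (F D hD x i).2 <+: (F D hD x (i + 1)).2 ∧
      (∃ r ∈ D i, r <+: (F D hD x (i + 1)).1) ∧
      (∃ r ∈ D i, r <+: (F D hD x (i + 1)).2) ∧
      (∀ n, (getB (F D hD x (i + 1)).1 n = true ∧ getB (F D hD x (i + 1)).2 n = true)
         ↔ (n = m ∨ (getB (F D hD x i).1 n = true ∧ getB (F D hD x i).2 n = true))) := by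
  rw [F_succ]
  exact step_spec D hD x i (F D hD x i).1 (F D hD x i).2 (len_eq D hD x i)

/-- The `i`-th coded position. -/
noncomputable def mv (i : ℕ) : ℕ := (F_spec D hD x i).choose

lemma mv_spec (i : ℕ) :
      ((F D hD x (i + 1)).1).length = mv D hD x i + 1 ∧
      ((F D hD x (i + 1)).2).length = mv D hD x i + 1 ∧
      ((F D hD x i).1).length ≤ mv D hD x i ∧
      (Even (mv D hD x i) ↔ i ∈ x) ∧
      (F D hD x i).1 <+: (F D hD x (i + 1)).1 ∧
      (F D hD x i).2 <+: (F D hD x (i + 1)).2 ∧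
      (∃ r ∈ D i, r <+: (F D hD x (i + 1)).1) ∧
      (∃ r ∈ D i, r <+: (F D hD x (i + 1)).2) ∧
      (∀ n, (getB (F D hD x (i + 1)).1 n = true ∧ getB (F D hD x (i + 1)).2 n = true)
         ↔ (n = mv D hD x i ∨
            (getB (F D hD x i).1 n = true ∧ getB (F D hD x i).2 n = true))) :=
  (F_spec D hD x i).choose_spec

lemma prefix_mono_fst {i j : ℕ} (hij : i ≤ j) : (F D hD x i).1 <+: (F D hD x j).1 := by
  induction j with
  | zero => simp_all
  | succ j ih =>
    rcases Nat.le_succ_iff.mp hij with h | h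
    · exact (ih h).trans (mv_spec D hD x j).2.2.2.2.1
    · rw [h]

lemma prefix_mono_snd {i j : ℕ} (hij : i ≤ j) : (F D hD x i).2 <+: (F D hD x j).2 := by
  induction j with
  | zero => simp_all
  | succ j ih =>
    rcases Nat.le_succ_iff.mp hij with h | h
    · exact (ih h).trans (mv_spec D hD x j).2.2.2.2.2.1
    · rw [h]

lemma len_ge (i : ℕ) : i ≤ ((F D hD x i).1).length := by
  induction i with
  | zero => simp
  | succ i ih =>
    have h1 := (mv_spec D hD x i).1
    have h3 := (mv_spec D hD x i).2.2.1
    omega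

lemma mv_strictMono : StrictMono (mv D hD x) := by
  apply strictMono_nat_of_lt_succ
  intro i
  have h1 := (mv_spec D hD x i).1
  have h3 := (mv_spec D hD x (i + 1)).2.2.1
  omega

/-- The first generic real. -/
noncomputable def g (n : ℕ) : Bool := getB (F D hD x (n + 1)).1 n

/-- The second generic real. -/
noncomputable def h (n : ℕ) : Bool := getB (F D hD x (n + 1)).2 n

lemma g_stable {i n : ℕ} (hn : n < ((F D hD x i).1).length) :
    g D hD x n = getB (F D hD x i).1 n := by
  have hn' : n < ((F D hD x (n + 1)).1).length := lt_of_lt_of_le (Nat.lt_succ_self n)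
    (len_ge D hD x (n + 1))
  rcases le_total i (n + 1) with hij | hij
  · rw [g, getB_of_prefix (prefix_mono_fst D hD x hij) hn]
  · rw [g, ← getB_of_prefix (prefix_mono_fst D hD x hij) hn']

lemma h_stable {i n : ℕ} (hn : n < ((F D hD x i).2).length) :
    h D hD x n = getB (F D hD x i).2 n := by
  have hn' : n < ((F D hD x (n + 1)).2).length := by
    have := len_ge D hD x (n + 1)
    have := len_eq D hD x (n + 1)
    omega
  rcases le_total i (n + 1) with hij | hij
  · rw [h, getB_of_prefix (prefix_mono_snd D hD x hij) hn]
  · rw [h, ← getB_of_prefix (prefix_mono_snd D hD x hij) hn']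

lemma common_iff_aux (i : ℕ) :
    ∀ n, (getB (F D hD x i).1 n = true ∧ getB (F D hD x i).2 n = true) ↔
      ∃ j < i, mv D hD x j = n := by
  induction i with
  | zero =>
    intro n
    simp [F, getB, List.getD]
  | succ i ih =>
    intro n
    rw [(mv_spec D hD x i).2.2.2.2.2.2.2.2 n, ih n]
    constructor
    · rintro (rfl | ⟨j, hj, rfl⟩)
      · exact ⟨i, Nat.lt_succ_self i, rfl⟩
      · exact ⟨j, hj.trans (Nat.lt_succ_self i), rfl⟩
    · rintro ⟨j, hj, rfl⟩
      rcases Nat.lt_succ_iff_lt_or_eq.mp hj with hj' | rfl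
      · exact Or.inr ⟨j, hj', rfl⟩
      · exact Or.inl rfl

lemma common_iff (n : ℕ) :
    (g D hD x n = true ∧ h D hD x n = true) ↔ ∃ j, mv D hD x j = n := by
  constructor
  · rintro ⟨h1, h2⟩
    have hn1 : n < ((F D hD x (n + 1)).1).length :=
      lt_of_lt_of_le (Nat.lt_succ_self n) (len_ge D hD x (n + 1))
    have hn2 : n < ((F D hD x (n + 1)).2).length := by
      have := len_eq D hD x (n + 1); omega
    rw [g_stable D hD x hn1] at h1
    rw [h_stable D hD x hn2] at h2
    obtain ⟨j, _, hj⟩ := (common_iff_aux D hD x (n + 1) n).mp ⟨h1, h2⟩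
    exact ⟨j, hj⟩
  · rintro ⟨j, rfl⟩
    have hn1 : mv D hD x j < ((F D hD x (j + 1)).1).length := by
      have := (mv_spec D hD x j).1; omega
    have hn2 : mv D hD x j < ((F D hD x (j + 1)).2).length := by
      have := (mv_spec D hD x j).2.1; omega
    have := (common_iff_aux D hD x (j + 1) (mv D hD x j)).mpr
      ⟨j, Nat.lt_succ_self j, rfl⟩
    rw [g_stable D hD x hn1, h_stable D hD x hn2]
    exact this

end Stmt9Aux

/-- `Nat.nth` of the range of a strictly monotone function is the function itself. -/
lemma nth_range_strictMono {f : ℕ → ℕ} (hf : StrictMono f) (i : ℕ) :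
    Nat.nth (fun n => ∃ j, f j = n) i = f i := by
  induction i using Nat.strong_induction_on with
  | _ i IH =>
    have hinf : (setOf fun n => ∃ j, f j = n).Infinite := by
      have : Set.range f ⊆ setOf fun n => ∃ j, f j = n := by
        rintro _ ⟨j, rfl⟩; exact ⟨j, rfl⟩
      exact (Set.infinite_range_of_injective hf.injective).mono this
    have hL := Nat.isLeast_nth_of_infinite hinf i
    refine le_antisymm (hL.2 ⟨⟨i, rfl⟩, fun k hk => ?_⟩) ?_
    · rw [IH k hk]; exact hf hk
    · obtain ⟨j, hj⟩ := hL.1.1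
      rw [← hj]
      apply hf.monotone
      by_contra hc
      push_neg at hc
      have := hL.1.2 j hc
      rw [IH j hc, hj] at this
      exact lt_irrefl _ this

/-- Cohen forcing fusion: given countably many dense subsets of Cohen forcing
(conditions are finite binary sequences, i.e. `List Bool`, extension being
end-extension) and a set `x ⊆ ω`, there are total functions `g, h : ω → 2` each of
which meets every `D i` via a finite initial segment, such that
`ḡ ∩ h̄ = {n : g n = h n = 1}` is infinite and its `i`-th element (in increasing
order) is even iff `i ∈ x`. -/
theorem stmt9 (D : ℕ → Set (List Bool))
    (hD : ∀ i, ∀ p : List Bool, ∃ q ∈ D i, p <+: q)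
    (x : Set ℕ) :
    ∃ g h : ℕ → Bool,
      (∀ i, ∃ n, (List.ofFn fun k : Fin n => g k) ∈ D i) ∧
      (∀ i, ∃ n, (List.ofFn fun k : Fin n => h k) ∈ D i) ∧
      {n | g n = true ∧ h n = true}.Infinite ∧
      (∀ i, Even (Nat.nth (fun n => g n = true ∧ h n = true) i) ↔ i ∈ x) := by
  classical
  refine ⟨Stmt9Aux.g D hD x, Stmt9Aux.h D hD x, ?_, ?_, ?_, ?_⟩
  · -- g meets every D i
    intro i
    obtain ⟨r, hrD, hrpfx⟩ := (Stmt9Aux.mv_spec D hD x i).2.2.2.2.2.2.1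
    refine ⟨r.length, ?_⟩
    have : (List.ofFn fun k : Fin r.length => Stmt9Aux.g D hD x k) = r := by
      apply List.ext_getElem (by simp)
      intro k hk1 hk2
      simp only [List.getElem_ofFn]
      have hkF : k < ((Stmt9Aux.F D hD x (i + 1)).1).length :=
        lt_of_lt_of_le hk2 hrpfx.length_le
      rw [Stmt9Aux.g_stable D hD x hkF,
        Stmt9Aux.getB_of_prefix hrpfx hk2]
      simp [Stmt9Aux.getB, List.getD, List.getElem?_eq_getElem hk2]
    rw [this]
    exact hrD
  · -- h meets every D i
    intro i
    obtain ⟨r, hrD, hrpfx⟩ := (Stmt9Aux.mv_spec D hD x i).2.2.2.2.2.2.2.1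
    refine ⟨r.length, ?_⟩
    have : (List.ofFn fun k : Fin r.length => Stmt9Aux.h D hD x k) = r := by
      apply List.ext_getElem (by simp)
      intro k hk1 hk2
      simp only [List.getElem_ofFn]
      have hkF : k < ((Stmt9Aux.F D hD x (i + 1)).2).length :=
        lt_of_lt_of_le hk2 hrpfx.length_le
      rw [Stmt9Aux.h_stable D hD x hkF,
        Stmt9Aux.getB_of_prefix hrpfx hk2]
      simp [Stmt9Aux.getB, List.getD, List.getElem?_eq_getElem hk2]
    rw [this]
    exact hrD
  · -- infinite intersection
    have hset : {n | Stmt9Aux.g D hD x n = true ∧ Stmt9Aux.h D hD x n = true}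
        = Set.range (Stmt9Aux.mv D hD x) := by
      ext n
      simp only [Set.mem_setOf_eq, Set.mem_range]
      exact Stmt9Aux.common_iff D hD x n
    rw [hset]
    exact Set.infinite_range_of_injective (Stmt9Aux.mv_strictMono D hD x).injective
  · -- parity coding
    intro i
    have hpred : (fun n => Stmt9Aux.g D hD x n = true ∧ Stmt9Aux.h D hD x n = true)
        = fun n => ∃ j, Stmt9Aux.mv D hD x j = n := by
      funext n
      exact propext (Stmt9Aux.common_iff D hD x n)
    rw [hpred, nth_range_strictMono (Stmt9Aux.mv_strictMono D hD x) i]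
    exact (Stmt9Aux.mv_spec D hD x i).2.2.2.1
end

section
/- Let κ be an infinite cardinal such that 2^κ = κ⁺. Then there is a universal graph on κ⁺: a graph G with vertex set of cardinality κ⁺ such that every graph H on a vertex set of cardinality at most κ⁺ admits an embedding into G as an induced subgraph (an injective map f with: u and v adjacent in H if and only if f(u) and f(v) are adjacent in G). -/
universe u

open Cardinal Ordinal Set

/-- If `2^κ = κ⁺` then there is a universal graph on `κ⁺`: a graph on a vertex set of
cardinality `κ⁺` into which every graph on at most `κ⁺` vertices embeds as an induced
subgraph. -/
theorem stmt11 (κ : Cardinal.{u}) (hκ : Cardinal.aleph0 ≤ κ)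
    (h : 2 ^ κ = Order.succ κ) :
    ∃ (V : Type u) (G : SimpleGraph V), Cardinal.mk V = Order.succ κ ∧
      ∀ (W : Type u) (H : SimpleGraph W), Cardinal.mk W ≤ Order.succ κ →
        Nonempty (H ↪g G) := by
  classical
  set μ := Order.succ κ with hμdef
  have hκμ : κ < μ := Order.lt_succ κ
  have hμ : ℵ₀ ≤ μ := hκ.trans hκμ.le
  have hreg : μ.IsRegular := isRegular_succ hκ
  set V := μ.ord.ToType with hVdef
  have hV : #V = μ := by rw [hVdef, Cardinal.mk_toType, Cardinal.card_ord]
  set I := κ.ord.ToType with hIdef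
  have hI : #I = κ := by rw [hIdef, Cardinal.mk_toType, Cardinal.card_ord]
  -- the coding equivalence
  have hfun : #((I → Option V) × V) = μ := by
    rw [Cardinal.mk_prod, Cardinal.lift_id, Cardinal.lift_id, ← Cardinal.power_def,
      Cardinal.mk_option, hV, hI, Cardinal.add_one_eq hμ]
    rw [← h, ← Cardinal.power_mul, Cardinal.mul_eq_self hκ, h, Cardinal.mul_eq_self hμ]
  obtain ⟨e⟩ : Nonempty (V ≃ ((I → Option V) × V)) := Cardinal.eq.mp (hV.trans hfun.symm)
  set S : V → Set V := fun β => {v | ∃ i, (e β).1 i = some v} with hSdef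
  -- extension property
  have hext : ∀ X : Set V, #X ≤ κ → ∀ b : V, ∃ β : V, b < β ∧ S β = X := by
    intro X hX b
    -- code X by a function g : I → Option V
    obtain ⟨j⟩ : Nonempty (X ↪ I) := by rw [← Cardinal.le_def, hI]; exact hX
    set g : I → Option V := fun i =>
      if hi : ∃ x : X, j x = i then some ((Classical.choose hi : X) : V) else none with hgdef
    have hg : {v | ∃ i, g i = some v} = X := by
      ext v
      constructor
      · rintro ⟨i, hi⟩
        by_cases hx : ∃ x : X, j x = i
        · have hgi : g i = some ((Classical.choose hx : X) : V) := dif_pos hx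
          rw [hgi, Option.some.injEq] at hi
          rw [← hi]; exact (Classical.choose hx).2
        · have hgi : g i = none := dif_neg hx
          rw [hgi] at hi; exact absurd hi.symm (Option.some_ne_none _)
      · intro hv
        refine ⟨j ⟨v, hv⟩, ?_⟩
        have hx : ∃ x : X, j x = j ⟨v, hv⟩ := ⟨⟨v, hv⟩, rfl⟩
        have hgi : g (j ⟨v, hv⟩) = some ((Classical.choose hx : X) : V) := dif_pos hx
        rw [hgi, Option.some.injEq]
        exact congrArg Subtype.val (j.injective (Classical.choose_spec hx))
    have hSval : ∀ v : V, S (e.symm (g, v)) = X := by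
      intro v
      rw [hSdef]
      simp only [Equiv.apply_symm_apply]
      exact hg
    by_contra hcon
    push_neg at hcon
    have hle : ∀ v : V, e.symm (g, v) ≤ b := fun v =>
      not_lt.mp (fun hlt => hcon _ hlt (hSval v))
    -- V injects into Iic b, contradiction with cardinality
    have hinj : Function.Injective (fun v : V => (⟨e.symm (g, v), hle v⟩ : Iic b)) :=
      fun v w hvw => congrArg Prod.snd (e.symm.injective (congrArg Subtype.val hvw))
    have h1 : μ ≤ #(Iic b) := hV.symm.trans_le (Cardinal.mk_le_of_injective hinj)
    have h2 : #(Iic b) ≤ κ := by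
      have : (Iic b : Set V) = Iio b ∪ {b} := (Iio_union_right).symm
      rw [this]
      calc #(↥(Iio b ∪ {b})) ≤ #(Iio b) + #({b} : Set V) := Cardinal.mk_union_le _ _
        _ ≤ κ + 1 := by
            gcongr
            · exact Order.lt_succ_iff.mp (mk_Iio_ord_toType (c := μ) b)
            · simp
        _ = κ := Cardinal.add_one_eq hκ
    exact absurd (h1.trans h2) (not_le.mpr hκμ)
  -- the graph
  set G : SimpleGraph V :=
    { Adj := fun α β => (α < β ∧ α ∈ S β) ∨ (β < α ∧ β ∈ S α)
      symm := by constructor; intro α β hαβ; tauto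
      loopless := by constructor; intro α hα; rcases hα with ⟨hlt, _⟩ | ⟨hlt, _⟩ <;> exact absurd hlt (lt_irrefl α) } with hGdef
  refine ⟨V, G, hV, ?_⟩
  -- first: every graph on V embeds
  have main : ∀ H : SimpleGraph V, Nonempty (H ↪g G) := by
    intro H
    have key : ∀ (w : V) (g : {u // u < w} → V), ∃ β : V,
        (∀ u : {u // u < w}, g u < β) ∧ S β = {v | ∃ u : {u // u < w}, H.Adj u.1 w ∧ g u = v} := by
      intro w g
      have hsmall : #{u // u < w} ≤ κ := Order.lt_succ_iff.mp (mk_Iio_ord_toType (c := μ) w)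
      have hrange : #(range g) ≤ κ := (Cardinal.mk_range_le).trans hsmall
      haveI : IsWellOrder V (· < ·) := isWellOrder_lt
      have hbdd : Bounded (· < ·) (range g) := by
        by_contra hnb
        have hcof : IsCofinal (range g) := fun x => by
          by_contra hx; push_neg at hx; exact hnb ⟨x, fun a ha => hx a ha⟩
        have hc : Order.cof V = μ := (Ordinal.cof_toType _).trans hreg.cof_eq
        have := Order.cof_le hcof
        rw [hc] at this
        exact absurd (this.trans hrange) (not_le.mpr hκμ)
      obtain ⟨b, hb⟩ := hbdd
      have hXsub : {v | ∃ u : {u // u < w}, H.Adj u.1 w ∧ g u = v} ⊆ range g := by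
        rintro v ⟨u, _, rfl⟩; exact mem_range_self u
      have hX : #{v | ∃ u : {u // u < w}, H.Adj u.1 w ∧ g u = v} ≤ κ :=
        (Cardinal.mk_le_mk_of_subset hXsub).trans hrange
      obtain ⟨β, hbβ, hSβ⟩ := hext _ hX b
      exact ⟨β, fun u => (hb (g u) (mem_range_self u)).trans hbβ, hSβ⟩
    let f : V → V := IsWellFounded.fix (α := V) (· < ·)
      (fun w ih => Classical.choose (key w (fun u => ih u.1 u.2)))
    have hf : ∀ w : V, f w = Classical.choose (key w (fun u => f u.1)) := fun w =>
      IsWellFounded.fix_eq (α := V) (· < ·) _ w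
    have hfspec : ∀ w : V, (∀ u : {u // u < w}, f u.1 < f w) ∧
        S (f w) = {v | ∃ u : {u // u < w}, H.Adj u.1 w ∧ f u.1 = v} := by
      intro w
      rw [hf w]
      exact Classical.choose_spec (key w (fun u => f u.1))
    have hmono : StrictMono f := fun u w huw => (hfspec w).1 ⟨u, huw⟩
    have hadj : ∀ u w : V, u < w → (G.Adj (f u) (f w) ↔ H.Adj u w) := by
      intro u w huw
      have hfuw : f u < f w := hmono huw
      constructor
      · rintro (⟨_, hmem⟩ | ⟨hlt, _⟩)
        · rw [(hfspec w).2] at hmem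
          obtain ⟨u', hadj', hu'⟩ := hmem
          have : u'.1 = u := hmono.injective hu'
          rwa [← this]
        · exact absurd hlt (asymm hfuw)
      · intro hH
        left
        refine ⟨hfuw, ?_⟩
        rw [(hfspec w).2]
        exact ⟨⟨u, huw⟩, hH, rfl⟩
    refine ⟨⟨⟨f, hmono.injective⟩, ?_⟩⟩
    intro a b
    simp only [Function.Embedding.coeFn_mk]
    rcases lt_trichotomy a b with hab | rfl | hba
    · exact hadj a b hab
    · simp [SimpleGraph.irrefl]
    · exact ⟨fun hg => ((hadj b a hba).mp hg.symm).symm, fun hh => ((hadj b a hba).mpr hh.symm).symm⟩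
  -- general case
  intro W H hW
  obtain ⟨ι⟩ : Nonempty (W ↪ V) := by rw [← Cardinal.le_def, hV]; exact hW
  obtain ⟨F⟩ := main (H.map ι)
  exact ⟨F.comp (SimpleGraph.Embedding.map ι H)⟩
end
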